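/- (Theorem 1, firing-interval guarantee.) Let t₀ < t₁ be real numbers, c > 0, α ∈ (0, 1), β > 0, and let f : ℝ → ℝ be differentiable with derivative f′, with |f(t)| ≤ c for all t ∈ [t₀, t₁], and f², f′² interval-integrable on [t₀, t₁]. Define e(t) = ∫_{t₀}^{t} f(u)² du and d(t) = ∫_{t₀}^{t} f′(u)² du, and set E = e(t₁), D = d(t₁); assume E > 0 and D > 0. Define the variable bias b(t) = c + 1/(π√(α · e(t))) for t ∈ (t₀, t₁], and suppose f + b is interval-integrable on [t₀, t₁] and the firing equation ∫_{t₀}^{t₁} (f(t) + b(t)) dt = 1/√(D + βE) holds (the right-hand side being the threshold Δ(t₁) = 1/√(d(t₁) + β e(t₁))). Then t₁ − t₀ ≤ π √(α E/(D + β E)) < π √(E/D); in particular the firing interval satisfies the local convergence condition T = t₁ − t₀ < π √(E/D). -/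

import Mathlib

open MeasureTheory intervalIntegral Real

lemma cs_aux (s u : ℝ) (hsu : s ≤ u) (g : ℝ → ℝ) (hm : Measurable g)
    (hg : IntervalIntegrable (fun v => g v ^ 2) volume s u) :
    (∫ v in s..u, |g v|) ^ 2 ≤ (u - s) * ∫ v in s..u, g v ^ 2 := by
  set μ := volume.restrict (Set.Ioc s u) with hμ
  haveI : IsFiniteMeasure μ := ⟨by
    rw [hμ, Measure.restrict_apply_univ]; exact measure_Ioc_lt_top⟩
  have h2 : Real.HolderConjugate 2 2 := Real.HolderConjugate.two_two
  have hms : AEStronglyMeasurable (fun v => |g v|) μ := hm.abs.aestronglyMeasurable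
  have hsq : Integrable (fun v => |g v| ^ 2) μ := by
    rw [hμ]; simpa [sq_abs, IntegrableOn] using hg.1
  have hmem : MemLp (fun v => |g v|) 2 μ := (memLp_two_iff_integrable_sq hms).2 hsq
  have hone : MemLp (fun _ : ℝ => (1:ℝ)) 2 μ := memLp_const 1
  have hofReal : ENNReal.ofReal (2:ℝ) = 2 := by norm_num [ENNReal.ofReal_ofNat]
  have holder := integral_mul_le_Lp_mul_Lq_of_nonneg (μ := μ) h2
      (f := fun v => |g v|) (g := fun _ => (1:ℝ))
      (Filter.Eventually.of_forall fun x => abs_nonneg _)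
      (Filter.Eventually.of_forall fun x => zero_le_one)
      (by rwa [hofReal]) (by rwa [hofReal])
  simp only [mul_one] at holder
  have hY : (μ Set.univ).toReal = u - s := by
    rw [hμ, Measure.restrict_apply_univ, Real.volume_Ioc, ENNReal.toReal_ofReal (by linarith)]
  have hXint : ∫ a, |g a| ^ (2:ℝ) ∂μ = ∫ a, g a ^ 2 ∂μ := by
    apply MeasureTheory.integral_congr_ae; filter_upwards with x
    rw [show ((2:ℝ)) = ((2:ℕ):ℝ) by norm_num, Real.rpow_natCast, sq_abs]
  have h1int : ∫ _a, (1:ℝ) ^ (2:ℝ) ∂μ = u - s := by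
    simp only [Real.one_rpow]
    rw [MeasureTheory.integral_const, smul_eq_mul, mul_one, measureReal_def, hY]
  rw [hXint, h1int] at holder
  set X := ∫ a, g a ^ 2 ∂μ with hX
  have hXnn : 0 ≤ X := integral_nonneg fun x => sq_nonneg _
  have hiieq : ∫ v in s..u, |g v| = ∫ a, |g a| ∂μ := integral_of_le hsu
  have hXeq : ∫ v in s..u, g v ^ 2 = X := integral_of_le hsu
  rw [hiieq, hXeq]
  have hrhs : (X ^ ((1:ℝ)/2) * (u - s) ^ ((1:ℝ)/2)) ^ 2 = X * (u - s) := by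
    rw [mul_pow, ← Real.rpow_natCast (X ^ ((1:ℝ)/2)) 2, ← Real.rpow_natCast ((u-s) ^ ((1:ℝ)/2)) 2,
      ← Real.rpow_mul hXnn, ← Real.rpow_mul (by linarith : (0:ℝ) ≤ u - s)]
    norm_num
  calc (∫ a, |g a| ∂μ) ^ 2 ≤ (X ^ ((1:ℝ)/2) * (u - s) ^ ((1:ℝ)/2)) ^ 2 := by
        apply pow_le_pow_left₀ (integral_nonneg fun x => abs_nonneg _) holder
      _ = X * (u - s) := hrhs
      _ = (u - s) * X := mul_comm _ _

/-- Theorem 1 (firing-interval guarantee of the VBT-IF-TEM): with bias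
`b(t) = c + 1/(π√(α e(t)))` and threshold `Δ(t₁) = 1/√(D + βE)`, the firing
interval satisfies `t₁ - t₀ ≤ π√(αE/(D+βE)) < π√(E/D)`. -/
theorem VBT_IFTEM_firing_interval_guarantee
    (t₀ t₁ : ℝ) (ht : t₀ < t₁) (c α β : ℝ)
    (hc : 0 < c) (hα0 : 0 < α) (hα1 : α < 1) (hβ : 0 < β)
    (f f' : ℝ → ℝ)
    (hderiv : ∀ t : ℝ, HasDerivAt f (f' t) t)
    (hbound : ∀ t ∈ Set.Icc t₀ t₁, |f t| ≤ c)
    (hfint : IntervalIntegrable (fun u => (f u) ^ 2) volume t₀ t₁)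
    (hf'int : IntervalIntegrable (fun u => (f' u) ^ 2) volume t₀ t₁)
    (e d : ℝ → ℝ)
    (he : ∀ t : ℝ, e t = ∫ u in t₀..t, (f u) ^ 2)
    (hd : ∀ t : ℝ, d t = ∫ u in t₀..t, (f' u) ^ 2)
    (E D : ℝ) (hE : E = e t₁) (hD : D = d t₁)
    (hEpos : 0 < E) (hDpos : 0 < D)
    (b : ℝ → ℝ)
    (hbias : ∀ t ∈ Set.Ioc t₀ t₁, b t = c + 1 / (π * Real.sqrt (α * e t)))
    (hint : IntervalIntegrable (fun t => f t + b t) volume t₀ t₁)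
    (hfire : ∫ t in t₀..t₁, (f t + b t) = 1 / Real.sqrt (D + β * E)) :
    t₁ - t₀ ≤ π * Real.sqrt (α * E / (D + β * E))
      ∧ π * Real.sqrt (α * E / (D + β * E)) < π * Real.sqrt (E / D) := by
  have hle : t₀ ≤ t₁ := ht.le
  have hDE : 0 < D + β * E := by positivity
  -- second conjunct
  have hsecond : π * Real.sqrt (α * E / (D + β * E)) < π * Real.sqrt (E / D) := by
    apply mul_lt_mul_of_pos_left _ Real.pi_pos
    apply Real.sqrt_lt_sqrt (by positivity)
    rw [div_lt_div_iff₀ hDE hDpos]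
    nlinarith [mul_pos (mul_pos hEpos hDpos) (by linarith : (0:ℝ) < 1 - α),
      mul_pos (mul_pos hβ hEpos) hEpos]
  refine ⟨?_, hsecond⟩
  -- basic facts about e
  have hsub : ∀ x y : ℝ, x ∈ Set.Icc t₀ t₁ → y ∈ Set.Icc t₀ t₁ →
      IntervalIntegrable (fun u => (f u)^2) volume x y := by
    intro x y hx hy
    apply hfint.mono_set
    exact Set.uIcc_subset_uIcc (by rw [Set.uIcc_of_le hle]; exact hx)
      (by rw [Set.uIcc_of_le hle]; exact hy)
  have hadj : ∀ x y : ℝ, x ∈ Set.Icc t₀ t₁ → y ∈ Set.Icc t₀ t₁ →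
      e y - e x = ∫ u in x..y, (f u)^2 := by
    intro x y hx hy
    rw [he, he, ← intervalIntegral.integral_add_adjacent_intervals
      (hsub t₀ x (Set.left_mem_Icc.2 hle) hx) (hsub x y hx hy)]
    ring
  have henn : ∀ x ∈ Set.Icc t₀ t₁, 0 ≤ e x := by
    intro x hx
    rw [he]
    exact intervalIntegral.integral_nonneg hx.1 fun u _ => sq_nonneg _
  have heleE : ∀ x ∈ Set.Icc t₀ t₁, e x ≤ E := by
    intro x hx
    have h1 : e t₁ - e x = ∫ u in x..t₁, (f u)^2 :=
      hadj x t₁ hx (Set.right_mem_Icc.2 hle)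
    have h2 : 0 ≤ ∫ u in x..t₁, (f u)^2 :=
      intervalIntegral.integral_nonneg hx.2 fun u _ => sq_nonneg _
    rw [hE]; linarith
  by_cases hpos : ∀ t ∈ Set.Ioc t₀ t₁, 0 < e t
  · -- main case
    have key : ∀ t ∈ Set.Ioc t₀ t₁, 1 / (π * Real.sqrt (α * E)) ≤ f t + b t := by
      intro t htmem
      have htIcc : t ∈ Set.Icc t₀ t₁ := ⟨htmem.1.le, htmem.2⟩
      rw [hbias t htmem]
      have het : 0 < e t := hpos t htmem
      have hetE : e t ≤ E := heleE t htIcc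
      have hsq1 : 0 < Real.sqrt (α * e t) := Real.sqrt_pos.2 (by positivity)
      have hmono : 1 / (π * Real.sqrt (α * E)) ≤ 1 / (π * Real.sqrt (α * e t)) := by
        apply one_div_le_one_div_of_le (by positivity)
        exact mul_le_mul_of_nonneg_left
          (Real.sqrt_le_sqrt (by nlinarith)) Real.pi_pos.le
      have hft : -c ≤ f t := neg_le_of_abs_le (hbound t htIcc)
      linarith
    have hmain : (t₁ - t₀) * (1 / (π * Real.sqrt (α * E))) ≤ 1 / Real.sqrt (D + β * E) := by
      rw [← hfire, intervalIntegral.integral_of_le hle]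
      have hconst : ∫ _t in Set.Ioc t₀ t₁, (1 / (π * Real.sqrt (α * E))) ∂volume
          = (t₁ - t₀) * (1 / (π * Real.sqrt (α * E))) := by
        rw [MeasureTheory.setIntegral_const, measureReal_def, Real.volume_Ioc, smul_eq_mul,
          ENNReal.toReal_ofReal (by linarith)]
      rw [← hconst]
      apply MeasureTheory.setIntegral_mono_on
      · exact integrableOn_const measure_Ioc_lt_top.ne
      · exact hint.1
      · exact measurableSet_Ioc
      · exact key
    -- conclude
    have hsqαE : 0 < Real.sqrt (α * E) := Real.sqrt_pos.2 (by positivity)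
    have hsqDE : 0 < Real.sqrt (D + β * E) := Real.sqrt_pos.2 hDE
    have heq : π * Real.sqrt (α * E / (D + β * E)) =
        π * Real.sqrt (α * E) / Real.sqrt (D + β * E) := by
      rw [Real.sqrt_div (by positivity) _, mul_div_assoc]
    rw [heq, le_div_iff₀ hsqDE]
    have := mul_le_mul_of_nonneg_right hmain (by positivity : (0:ℝ) ≤ π * Real.sqrt (α * E))
    calc (t₁ - t₀) * Real.sqrt (D + β * E)
        = ((t₁ - t₀) * (1 / (π * Real.sqrt (α * E)))) * (π * Real.sqrt (α * E))
          * Real.sqrt (D + β * E) := by field_simp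
      _ ≤ (1 / Real.sqrt (D + β * E)) * (π * Real.sqrt (α * E)) * Real.sqrt (D + β * E) := by
          apply mul_le_mul_of_nonneg_right this hsqDE.le
      _ = π * Real.sqrt (α * E) := by field_simp
  · -- contradiction case: e vanishes somewhere in (t₀, t₁]
    exfalso
    push_neg at hpos
    obtain ⟨s₀, hs₀mem, hs₀⟩ := hpos
    have hs₀Icc : s₀ ∈ Set.Icc t₀ t₁ := ⟨hs₀mem.1.le, hs₀mem.2⟩
    have hs₀0 : e s₀ = 0 := le_antisymm hs₀ (henn s₀ hs₀Icc)
    -- continuity of e on [t₀, t₁]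
    have fcont : Continuous f := Differentiable.continuous fun t => (hderiv t).differentiableAt
    have econt : ContinuousOn e (Set.Icc t₀ t₁) := by
      have h1 : ContinuousOn (fun x => ∫ u in t₀..x, (f u)^2) (Set.uIcc t₀ t₁) :=
        intervalIntegral.continuousOn_primitive_interval' hfint Set.left_mem_uIcc
      rw [Set.uIcc_of_le hle] at h1
      exact h1.congr fun x _ => he x
    -- the zero set and its supremum
    set S : Set ℝ := {u ∈ Set.Icc t₀ t₁ | e u = 0} with hS
    have hSne : S.Nonempty := ⟨s₀, hs₀Icc, hs₀0⟩
    have hSbdd : BddAbove S := ⟨t₁, fun x hx => hx.1.2⟩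
    have hSclosed : IsClosed S := by
      have : S = Set.Icc t₀ t₁ ∩ e ⁻¹' {0} := by
        ext x; simp [hS, Set.mem_setOf_eq]
      rw [this]
      exact econt.preimage_isClosed_of_isClosed isClosed_Icc isClosed_singleton
    set s := sSup S with hs
    have hsS : s ∈ S := hSclosed.csSup_mem hSne hSbdd
    have hsIcc : s ∈ Set.Icc t₀ t₁ := hsS.1
    have hes : e s = 0 := hsS.2
    have hs₀les : s₀ ≤ s := le_csSup hSbdd ⟨hs₀Icc, hs₀0⟩
    have ht₀s : t₀ < s := lt_of_lt_of_le hs₀mem.1 hs₀les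
    have hslt : s < t₁ := by
      rcases lt_or_eq_of_le hsIcc.2 with h | h
      · exact h
      · exfalso; rw [h] at hes; rw [hE, hes] at hEpos; exact lt_irrefl 0 hEpos
    -- e vanishes on [t₀, s]
    have hzero : ∀ u ∈ Set.Icc t₀ s, e u = 0 := by
      intro u hu
      have huIcc : u ∈ Set.Icc t₀ t₁ := ⟨hu.1, le_trans hu.2 hsIcc.2⟩
      have h1 : e s - e u = ∫ v in u..s, (f v)^2 := hadj u s huIcc hsIcc
      have h2 : 0 ≤ ∫ v in u..s, (f v)^2 :=
        intervalIntegral.integral_nonneg hu.2 fun v _ => sq_nonneg _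
      have := henn u huIcc
      linarith [hes ▸ h1]
    -- e is positive on (s, t₁]
    have hepos : ∀ t ∈ Set.Ioc s t₁, 0 < e t := by
      intro t ht'
      have htIcc : t ∈ Set.Icc t₀ t₁ := ⟨le_trans hsIcc.1 ht'.1.le, ht'.2⟩
      rcases lt_or_eq_of_le (henn t htIcc) with h | h
      · exact h
      · exfalso
        have : t ∈ S := ⟨htIcc, h.symm⟩
        exact absurd (le_csSup hSbdd this) (not_le.2 ht'.1)
    -- f s = 0
    have hfs : f s = 0 := by
      have hprim : HasDerivAt (fun x => ∫ u in t₀..x, (f u)^2) ((f s)^2) s := by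
        apply intervalIntegral.integral_hasDerivAt_right
          (hsub t₀ s (Set.left_mem_Icc.2 hle) hsIcc)
        · exact (fcont.pow 2).stronglyMeasurable.stronglyMeasurableAtFilter
        · exact (fcont.pow 2).continuousAt
      have hW : HasDerivWithinAt (fun x => ∫ u in t₀..x, (f u)^2) ((f s)^2)
          (Set.Icc t₀ s) s := hprim.hasDerivWithinAt
      have hW0 : HasDerivWithinAt (fun x => ∫ u in t₀..x, (f u)^2) 0
          (Set.Icc t₀ s) s := by
        apply (hasDerivWithinAt_const s (Set.Icc t₀ s) (0:ℝ)).congr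
        · intro y hy; rw [← he y]; exact hzero y hy
        · rw [← he s]; exact hes
      have hud : UniqueDiffWithinAt ℝ (Set.Icc t₀ s) s :=
        (uniqueDiffOn_Icc ht₀s) s (Set.right_mem_Icc.2 ht₀s.le)
      have h1 := hW.derivWithin hud
      have h2 := hW0.derivWithin hud
      have : (f s)^2 = 0 := by rw [← h1, h2]
      exact pow_eq_zero_iff (by norm_num) |>.1 this
    -- f' is interval integrable
    have hf'meas : Measurable f' := by
      have : f' = deriv f := funext fun t => ((hderiv t).deriv).symm
      rw [this]; exact measurable_deriv f
    have hf'ii : IntervalIntegrable f' volume t₀ t₁ := by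
      have hdom : IntervalIntegrable (fun t => (1 + (f' t)^2)/2) volume t₀ t₁ := by
        have h1 : IntervalIntegrable (fun _ : ℝ => (1:ℝ)) volume t₀ t₁ :=
          intervalIntegrable_const
        have h2 := (h1.add hf'int).div_const 2
        exact h2
      apply IntervalIntegrable.mono_fun hdom hf'meas.aestronglyMeasurable
      filter_upwards with x
      show ‖f' x‖ ≤ ‖(1 + (f' x)^2)/2‖
      simp only [Real.norm_eq_abs]
      rw [abs_of_nonneg (by nlinarith [sq_nonneg (f' x)] : (0:ℝ) ≤ (1 + (f' x)^2)/2)]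
      nlinarith [sq_nonneg (|f' x| - 1), abs_nonneg (f' x), sq_abs (f' x)]
    have hf'sub : ∀ x y : ℝ, x ∈ Set.Icc t₀ t₁ → y ∈ Set.Icc t₀ t₁ →
        IntervalIntegrable f' volume x y := by
      intro x y hx hy
      apply hf'ii.mono_set
      exact Set.uIcc_subset_uIcc (by rw [Set.uIcc_of_le hle]; exact hx)
        (by rw [Set.uIcc_of_le hle]; exact hy)
    have hf'sqsub : ∀ x y : ℝ, x ∈ Set.Icc t₀ t₁ → y ∈ Set.Icc t₀ t₁ →
        IntervalIntegrable (fun u => (f' u)^2) volume x y := by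
      intro x y hx hy
      apply hf'int.mono_set
      exact Set.uIcc_subset_uIcc (by rw [Set.uIcc_of_le hle]; exact hx)
        (by rw [Set.uIcc_of_le hle]; exact hy)
    -- ∫ f'^2 on subinterval ≤ D
    have hdnn : ∀ x y : ℝ, x ∈ Set.Icc t₀ t₁ → y ∈ Set.Icc t₀ t₁ → x ≤ y →
        (∫ v in x..y, (f' v)^2) ≤ D := by
      intro x y hx hy hxy
      have h1 : (∫ v in t₀..x, (f' v)^2) + (∫ v in x..y, (f' v)^2) = ∫ v in t₀..y, (f' v)^2 :=
        intervalIntegral.integral_add_adjacent_intervals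
          (hf'sqsub t₀ x (Set.left_mem_Icc.2 hle) hx) (hf'sqsub x y hx hy)
      have h2 : (∫ v in t₀..y, (f' v)^2) + (∫ v in y..t₁, (f' v)^2) = ∫ v in t₀..t₁, (f' v)^2 :=
        intervalIntegral.integral_add_adjacent_intervals
          (hf'sqsub t₀ y (Set.left_mem_Icc.2 hle) hy) (hf'sqsub y t₁ hy (Set.right_mem_Icc.2 hle))
      have h3 : 0 ≤ ∫ v in t₀..x, (f' v)^2 :=
        intervalIntegral.integral_nonneg hx.1 fun v _ => sq_nonneg _
      have h4 : 0 ≤ ∫ v in y..t₁, (f' v)^2 :=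
        intervalIntegral.integral_nonneg hy.2 fun v _ => sq_nonneg _
      have h5 : D = ∫ v in t₀..t₁, (f' v)^2 := by rw [hD, hd]
      linarith
    -- pointwise bound f u ^ 2 ≤ D * (u - s) on [s, t₁]
    have hfub : ∀ u ∈ Set.Icc s t₁, (f u)^2 ≤ D * (u - s) := by
      intro u hu
      have huIcc : u ∈ Set.Icc t₀ t₁ := ⟨le_trans hsIcc.1 hu.1, hu.2⟩
      have hftc : ∫ v in s..u, f' v = f u - f s := by
        apply intervalIntegral.integral_eq_sub_of_hasDerivAt
        · exact fun x _ => hderiv x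
        · exact hf'sub s u hsIcc huIcc
      have habs : |f u| ≤ ∫ v in s..u, |f' v| := by
        rw [← sub_zero (f u), ← hfs, ← hftc]
        exact intervalIntegral.abs_integral_le_integral_abs hu.1
      have hcs := cs_aux s u hu.1 f' hf'meas (hf'sqsub s u hsIcc huIcc)
      have h6 : (f u)^2 ≤ (∫ v in s..u, |f' v|)^2 := by
        rw [← sq_abs (f u)]
        apply pow_le_pow_left₀ (abs_nonneg _) habs
      have h7 : (∫ v in s..u, (f' v)^2) ≤ D := hdnn s u hsIcc huIcc hu.1
      have h8 : 0 ≤ u - s := by linarith [hu.1]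
      nlinarith
    -- e t ≤ D * (t - s)^2 on (s, t₁]
    have hebound : ∀ t ∈ Set.Ioc s t₁, e t ≤ D * (t - s)^2 := by
      intro t ht'
      have htIcc : t ∈ Set.Icc t₀ t₁ := ⟨le_trans hsIcc.1 ht'.1.le, ht'.2⟩
      have h1 : e t - e s = ∫ u in s..t, (f u)^2 := hadj s t hsIcc htIcc
      have h2 : (∫ u in s..t, (f u)^2) ≤ ∫ u in s..t, D * (t - s) := by
        apply intervalIntegral.integral_mono_on ht'.1.le (hsub s t hsIcc htIcc)
          intervalIntegrable_const
        intro u hu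
        calc (f u)^2 ≤ D * (u - s) := hfub u ⟨hu.1, le_trans hu.2 ht'.2⟩
          _ ≤ D * (t - s) := by
              apply mul_le_mul_of_nonneg_left _ hDpos.le
              linarith [hu.2]
      rw [intervalIntegral.integral_const, smul_eq_mul] at h2
      rw [hes] at h1
      nlinarith
    -- key pointwise bound: (t - s)⁻¹ ≤ π√(αD) * (f t + b t) on (s, t₁]
    set K : ℝ := π * Real.sqrt (α * D) with hK
    have hKpos : 0 < K := by
      rw [hK]; positivity
    have hkey : ∀ t ∈ Set.Ioc s t₁, (t - s)⁻¹ ≤ K * (f t + b t) := by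
      intro t ht'
      have htIoc : t ∈ Set.Ioc t₀ t₁ := ⟨lt_of_lt_of_le ht₀s ht'.1.le, ht'.2⟩
      have htIcc : t ∈ Set.Icc t₀ t₁ := ⟨htIoc.1.le, htIoc.2⟩
      have hts : 0 < t - s := sub_pos.2 ht'.1
      have het : 0 < e t := hepos t ht'
      have hsq1 : 0 < Real.sqrt (α * e t) := Real.sqrt_pos.2 (by positivity)
      have hsqle : Real.sqrt (α * e t) ≤ Real.sqrt (α * D) * (t - s) := by
        have h1 : α * e t ≤ α * D * (t - s)^2 := by
          have h := hebound t ht'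
          calc α * e t ≤ α * (D * (t - s)^2) := mul_le_mul_of_nonneg_left h hα0.le
            _ = α * D * (t - s)^2 := (mul_assoc α D ((t - s)^2)).symm
        calc Real.sqrt (α * e t) ≤ Real.sqrt (α * D * (t - s)^2) := Real.sqrt_le_sqrt h1
          _ = Real.sqrt (α * D) * (t - s) := by
              rw [Real.sqrt_mul (by positivity) ((t-s)^2), Real.sqrt_sq hts.le]
      have hbig : (t - s)⁻¹ ≤ K * (1 / (π * Real.sqrt (α * e t))) := by
        rw [hK, mul_one_div, inv_eq_one_div, div_le_div_iff₀ hts (by positivity)]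
        rw [one_mul, mul_assoc]
        exact mul_le_mul_of_nonneg_left hsqle Real.pi_pos.le
      have hbt : b t = c + 1 / (π * Real.sqrt (α * e t)) := hbias t htIoc
      have hft : -c ≤ f t := neg_le_of_abs_le (hbound t htIcc)
      have : 1 / (π * Real.sqrt (α * e t)) ≤ f t + b t := by rw [hbt]; linarith
      calc (t - s)⁻¹ ≤ K * (1 / (π * Real.sqrt (α * e t))) := hbig
        _ ≤ K * (f t + b t) := mul_le_mul_of_nonneg_left this hKpos.le
    -- hence (· - s)⁻¹ is interval integrable on s..t₁ : contradiction
    have hfbii : IntervalIntegrable (fun t => K * (f t + b t)) volume s t₁ := by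
      apply IntervalIntegrable.const_mul
      apply hint.mono_set
      exact Set.uIcc_subset_uIcc (by rw [Set.uIcc_of_le hle]; exact hsIcc)
        (by rw [Set.uIcc_of_le hle]; exact Set.right_mem_Icc.2 hle)
    have hinvii : IntervalIntegrable (fun t => (t - s)⁻¹) volume s t₁ := by
      apply IntervalIntegrable.mono_fun hfbii
        (((measurable_id.sub_const s).inv).aestronglyMeasurable)
      rw [Set.uIoc_of_le hslt.le]
      filter_upwards [ae_restrict_mem measurableSet_Ioc] with x hx
      have h1 := hkey x hx
      have h2 : 0 < (x - s)⁻¹ := inv_pos.2 (by linarith [hx.1])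
      show ‖(x - s)⁻¹‖ ≤ ‖K * (f x + b x)‖
      rw [Real.norm_eq_abs, Real.norm_eq_abs, abs_of_pos h2, abs_of_nonneg (by linarith)]
      exact h1
    rcases intervalIntegrable_sub_inv_iff.1 hinvii with h | h
    · exact absurd h hslt.ne
    · exact h Set.left_mem_uIcc
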